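/- Let u, v, θ : ℝ → ℝ be differentiable functions satisfying u'(s) = cos θ(s), v'(s) = sin θ(s), θ'(s) = sin θ(s) · tan u(s) + cos θ(s), and |u(s)| < π/2 for all s ∈ ℝ, with initial conditions u(0) = v(0) = θ(0) = 0. Then for all s ∈ ℝ: u(−s) = −u(s), v(−s) = v(s), and θ(−s) = −θ(s); in particular the planar curve β(s) = (u(s), v(s)) is symmetric with respect to the v-axis. -/

import Mathlib

open Real Set

private lemma sin_lip (a b : ℝ) : |Real.sin a - Real.sin b| ≤ |a - b| := by
  rw [Real.sin_sub_sin]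
  calc |2 * Real.sin ((a - b) / 2) * Real.cos ((a + b) / 2)|
      = 2 * |Real.sin ((a - b) / 2)| * |Real.cos ((a + b) / 2)| := by
        rw [abs_mul, abs_mul]; simp
    _ ≤ 2 * |(a - b) / 2| * 1 := by
        apply mul_le_mul _ (Real.abs_cos_le_one _) (abs_nonneg _) (by positivity)
        have := Real.abs_sin_le_abs (x := (a - b) / 2)
        nlinarith [abs_nonneg (Real.sin ((a - b) / 2))]
    _ = |a - b| := by rw [abs_div]; simp; ring
  
private lemma cos_lip (a b : ℝ) : |Real.cos a - Real.cos b| ≤ |a - b| := by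
  rw [Real.cos_sub_cos]
  calc |-2 * Real.sin ((a + b) / 2) * Real.sin ((a - b) / 2)|
      = 2 * |Real.sin ((a - b) / 2)| * |Real.sin ((a + b) / 2)| := by
        rw [abs_mul, abs_mul]; simp; ring
    _ ≤ 2 * |(a - b) / 2| * 1 := by
        apply mul_le_mul _ (Real.abs_sin_le_one _) (abs_nonneg _) (by positivity)
        have := Real.abs_sin_le_abs (x := (a - b) / 2)
        nlinarith [abs_nonneg (Real.sin ((a - b) / 2))]
    _ = |a - b| := by rw [abs_div]; simp; ring

private lemma cos_ge_of_abs_le {x c : ℝ} (hx : |x| ≤ c) (hc : c < π / 2) :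
    Real.cos c ≤ Real.cos x := by
  calc Real.cos c ≤ Real.cos |x| :=
        Real.cos_le_cos_of_nonneg_of_le_pi (abs_nonneg x)
          (by linarith [Real.pi_pos]) hx
    _ = Real.cos x := Real.cos_abs x

private lemma abs_tan_le {x c : ℝ} (hx : |x| ≤ c) (hc : c < π / 2) :
    |Real.tan x| ≤ Real.tan c := by
  have h1 : -(π/2) < x := by cases abs_le.mp hx; linarith
  have h2 : x < π/2 := by cases abs_le.mp hx; linarith
  have hcc : -(π/2) < c := by linarith [abs_nonneg x, Real.pi_pos]
  have hmono := Real.strictMonoOn_tan.monotoneOn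
  rw [abs_le]
  constructor
  · have : Real.tan (-c) ≤ Real.tan x :=
      hmono ⟨by linarith, by linarith [abs_nonneg x, (abs_le.mp hx).1]⟩ ⟨h1, h2⟩
        (by linarith [(abs_le.mp hx).1])
    rwa [Real.tan_neg] at this
  · exact hmono ⟨h1, h2⟩ ⟨hcc, hc⟩ (le_trans (le_abs_self x) hx)

private lemma tan_lip {x y c : ℝ} (hx : |x| ≤ c) (hy : |y| ≤ c) (hc : c < π / 2) :
    |Real.tan x - Real.tan y| ≤ 1 / Real.cos c ^ 2 * |x - y| := by
  have hcc : 0 < Real.cos c :=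
    Real.cos_pos_of_mem_Ioo ⟨by linarith [abs_nonneg x], hc⟩
  have hcx : Real.cos c ≤ Real.cos x := cos_ge_of_abs_le hx hc
  have hcy : Real.cos c ≤ Real.cos y := cos_ge_of_abs_le hy hc
  have hx0' : 0 < Real.cos x := lt_of_lt_of_le hcc hcx
  have hy0' : 0 < Real.cos y := lt_of_lt_of_le hcc hcy
  have hx0 : Real.cos x ≠ 0 := ne_of_gt hx0'
  have hy0 : Real.cos y ≠ 0 := ne_of_gt hy0' 
  have hsub : Real.tan x - Real.tan y = Real.sin (x - y) / (Real.cos x * Real.cos y) := by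
    rw [Real.tan_eq_sin_div_cos, Real.tan_eq_sin_div_cos, Real.sin_sub]
    field_simp
  rw [hsub, abs_div, abs_of_pos (by positivity : (0:ℝ) < Real.cos x * Real.cos y)]
  have h1 : |Real.sin (x - y)| / (Real.cos x * Real.cos y) ≤ |x - y| / (Real.cos c * Real.cos c) :=
    div_le_div₀ (abs_nonneg _) (Real.abs_sin_le_abs) (by positivity)
      (mul_le_mul hcx hcy (le_of_lt hcc) (by positivity))
  calc |Real.sin (x - y)| / (Real.cos x * Real.cos y)
      ≤ |x - y| / (Real.cos c * Real.cos c) := h1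
    _ = 1 / Real.cos c ^ 2 * |x - y| := by rw [pow_two]; ring

/-- A solution of the system `u' = cos θ`, `v' = sin θ`, `θ' = sin θ · tan u + cos θ`
(generating curve of a rotational `V`-soliton in `𝕊²×ℝ`) with `|u| < π/2` and initial
conditions `u(0) = v(0) = θ(0) = 0` satisfies `u(−s) = −u(s)`, `v(−s) = v(s)`,
`θ(−s) = −θ(s)`; in particular the curve `β = (u, v)` is symmetric about the `v`-axis. -/
theorem rotational_V_soliton_symmetry (u v θ : ℝ → ℝ)
    (hu : ∀ s, HasDerivAt u (cos (θ s)) s)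
    (hv : ∀ s, HasDerivAt v (sin (θ s)) s)
    (hθ : ∀ s, HasDerivAt θ (sin (θ s) * tan (u s) + cos (θ s)) s)
    (hbound : ∀ s, |u s| < π / 2)
    (hu0 : u 0 = 0) (hv0 : v 0 = 0) (hθ0 : θ 0 = 0) :
    ∀ s : ℝ, u (-s) = -u s ∧ v (-s) = v s ∧ θ (-s) = -θ s := by
  have hucont : Continuous u := by
    rw [continuous_iff_continuousAt]; exact fun s => (hu s).continuousAt
  -- Key symmetry for u and θ via uniqueness of ODE solutions
  have key : ∀ s : ℝ, u (-s) = -u s ∧ θ (-s) = -θ s := by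
    intro s₀
    set T : ℝ := |s₀| + 1 with hT
    have hT0 : 0 < T := by positivity
    -- sup of |u| on [-T,T]
    obtain ⟨x₀, hx₀, hmax⟩ := (isCompact_Icc (a := -T) (b := T)).exists_isMaxOn
      (nonempty_Icc.mpr (by linarith)) ((continuous_abs.comp hucont).continuousOn)
    set c : ℝ := |u x₀| with hcdef
    have hc2 : c < π / 2 := hbound x₀
    have hc0 : 0 ≤ c := abs_nonneg _
    have hcosc : 0 < Real.cos c := Real.cos_pos_of_mem_Ioo ⟨by linarith, hc2⟩
    have hub : ∀ t ∈ Icc (-T) T, |u t| ≤ c := fun t ht => hmax ht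
    have htanc : 0 ≤ Real.tan c :=
      Real.tan_nonneg_of_nonneg_of_le_pi_div_two hc0 (le_of_lt hc2)
    set L : ℝ := 1 / Real.cos c ^ 2 + Real.tan c + 1 with hLdef
    have hL0 : 0 ≤ L := by positivity
    have hL1 : 1 ≤ L := by
      have h : 0 ≤ 1 / Real.cos c ^ 2 := by positivity
      rw [hLdef]; linarith
    set K : NNReal := ⟨L, hL0⟩ with hKdef
    set V : ℝ × ℝ → ℝ × ℝ :=
      fun p => (Real.cos p.2, Real.sin p.2 * Real.tan p.1 + Real.cos p.2) with hVdef
    set S : Set (ℝ × ℝ) := {p | |p.1| ≤ c} with hSdef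
    have hlip : ∀ _t : ℝ, LipschitzOnWith K V S := by
      intro _t
      apply LipschitzOnWith.of_dist_le_mul
      intro p hp q hq
      have hp1 : |p.1| ≤ c := hp
      have hq1 : |q.1| ≤ c := hq
      rw [Prod.dist_eq, Prod.dist_eq]
      simp only [Real.dist_eq, hVdef]
      have hDx : |p.1 - q.1| ≤ max |p.1 - q.1| |p.2 - q.2| := le_max_left _ _
      have hDy : |p.2 - q.2| ≤ max |p.1 - q.1| |p.2 - q.2| := le_max_right _ _
      have hKval : (K : ℝ) = L := rfl
      rw [hKval]
      have hD0 : 0 ≤ max |p.1 - q.1| |p.2 - q.2| :=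
        le_trans (abs_nonneg _) hDx
      set D : ℝ := max |p.1 - q.1| |p.2 - q.2| with hDdef
      have ht1 := tan_lip hp1 hq1 hc2
      have ht2 := abs_tan_le hq1 hc2
      have hs1 := sin_lip p.2 q.2
      have hc1 := cos_lip p.2 q.2
      have hsb := Real.abs_sin_le_one p.2
      clear_value D L
      apply max_le
      · have : |Real.cos p.2 - Real.cos q.2| ≤ D := hc1.trans hDy
        nlinarith [mul_nonneg (by linarith : (0:ℝ) ≤ L - 1) hD0]
      · have hsplit : Real.sin p.2 * Real.tan p.1 + Real.cos p.2
            - (Real.sin q.2 * Real.tan q.1 + Real.cos q.2)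
            = (Real.sin p.2 * (Real.tan p.1 - Real.tan q.1)
              + Real.tan q.1 * (Real.sin p.2 - Real.sin q.2))
              + (Real.cos p.2 - Real.cos q.2) := by ring
        have habs : |Real.sin p.2 * Real.tan p.1 + Real.cos p.2
            - (Real.sin q.2 * Real.tan q.1 + Real.cos q.2)|
            ≤ |Real.sin p.2| * |Real.tan p.1 - Real.tan q.1|
              + |Real.tan q.1| * |Real.sin p.2 - Real.sin q.2|
              + |Real.cos p.2 - Real.cos q.2| := by
          rw [hsplit]
          refine le_trans (abs_add_le _ _) ?_
          refine add_le_add (le_trans (abs_add_le _ _) ?_) le_rfl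
          rw [abs_mul, abs_mul]
        have b1 : |Real.sin p.2| * |Real.tan p.1 - Real.tan q.1|
            ≤ 1 / Real.cos c ^ 2 * D := by
          have h1 : |Real.sin p.2| * |Real.tan p.1 - Real.tan q.1|
              ≤ 1 * (1 / Real.cos c ^ 2 * |p.1 - q.1|) :=
            mul_le_mul hsb ht1 (abs_nonneg _) zero_le_one
          have h2 : 1 / Real.cos c ^ 2 * |p.1 - q.1| ≤ 1 / Real.cos c ^ 2 * D :=
            mul_le_mul_of_nonneg_left hDx (by positivity)
          linarith
        have b2 : |Real.tan q.1| * |Real.sin p.2 - Real.sin q.2| ≤ Real.tan c * D :=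
          mul_le_mul ht2 (hs1.trans hDy) (abs_nonneg _) htanc
        have b3 : |Real.cos p.2 - Real.cos q.2| ≤ D := hc1.trans hDy
        have expand : L * D = 1 / Real.cos c ^ 2 * D + Real.tan c * D + D := by
          rw [hLdef]; ring
        have final : |Real.sin p.2 * Real.tan p.1 + Real.cos p.2
            - (Real.sin q.2 * Real.tan q.1 + Real.cos q.2)|
            ≤ 1 / Real.cos c ^ 2 * D + Real.tan c * D + D := by linarith
        linarith [expand, final]
    -- the two solutions
    set f : ℝ → ℝ × ℝ := fun t => (u t, θ t) with hfdef
    set g : ℝ → ℝ × ℝ := fun t => (-u (-t), -θ (-t)) with hgdef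
    have hf : ∀ t ∈ Ioo (-T) T, HasDerivAt f (V (f t)) t ∧ f t ∈ S := by
      intro t ht
      refine ⟨(hu t).prodMk (hθ t), hub t (Ioo_subset_Icc_self ht)⟩
    have hg : ∀ t ∈ Ioo (-T) T, HasDerivAt g (V (g t)) t ∧ g t ∈ S := by
      intro t ht
      have hmem : g t ∈ S := by
        have : -t ∈ Icc (-T) T := ⟨by linarith [ht.2], by linarith [ht.1]⟩
        simpa [hgdef, hSdef] using hub (-t) this
      have h1 : HasDerivAt (fun t : ℝ => -u (-t)) (Real.cos (θ (-t))) t := by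
        have := ((hu (-t)).comp t (hasDerivAt_neg t)).neg
        simpa [Function.comp_def, Pi.neg_def] using this
      have h2 : HasDerivAt (fun t : ℝ => -θ (-t))
          (Real.sin (θ (-t)) * Real.tan (u (-t)) + Real.cos (θ (-t))) t := by
        have := ((hθ (-t)).comp t (hasDerivAt_neg t)).neg
        simpa [Function.comp_def, Pi.neg_def] using this
      refine ⟨?_, hmem⟩
      have hVg : V (g t) = (Real.cos (θ (-t)),
          Real.sin (θ (-t)) * Real.tan (u (-t)) + Real.cos (θ (-t))) := by
        simp [hVdef, hgdef, Real.cos_neg, Real.sin_neg, Real.tan_neg]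
      rw [hVg]
      exact h1.prodMk h2
    have heq : f 0 = g 0 := by
      simp [hfdef, hgdef, hu0, hθ0]
    have huniq := ODE_solution_unique_of_mem_Ioo (v := fun _ => V) (s := fun _ => S) (fun t _ => hlip t)
      (t₀ := 0) (a := -T) (b := T) ⟨by linarith, hT0⟩ hf hg heq
    have hs₀ : s₀ ∈ Ioo (-T) T := by
      constructor
      · have := neg_abs_le s₀; linarith
      · have := le_abs_self s₀; linarith
    have := huniq hs₀
    have h1 : u s₀ = -u (-s₀) := congrArg Prod.fst this
    have h2 : θ s₀ = -θ (-s₀) := congrArg Prod.snd this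
    constructor <;> linarith
  -- symmetry of v
  intro s
  refine ⟨(key s).1, ?_, (key s).2⟩
  have hw : ∀ t : ℝ, HasDerivAt (fun t => v t - v (-t)) 0 t := by
    intro t
    have h2 : HasDerivAt (fun t : ℝ => v (-t)) (-Real.sin (θ (-t))) t := by
      have := (hv (-t)).comp t (hasDerivAt_neg t)
      simpa [Function.comp_def] using this
    have h3 := (hv t).sub h2
    have : Real.sin (θ t) - -Real.sin (θ (-t)) = 0 := by
      rw [(key t).2, Real.sin_neg]; ring
    rwa [this] at h3
  have hdiff : Differentiable ℝ (fun t => v t - v (-t)) := fun t => (hw t).differentiableAt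
  have hderiv : ∀ t, deriv (fun t => v t - v (-t)) t = 0 := fun t => (hw t).deriv
  have := is_const_of_deriv_eq_zero hdiff hderiv s 0
  simp only [neg_zero] at this
  linarith
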